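/- Let f₁,…,fₙ : ℝ^d → ℝ be differentiable and f = (1/n)∑_{i=1}^n fᵢ. Fix x, x̃_old ∈ ℝ^d and a positive integer m. For a point x̃ ∈ ℝ^d and a random batch I = (i₁,…,i_b), define the SVRG error err(I, x̃) = ‖(1/b)∑_{j=1}^b (∇f_{i_j}(x) − ∇f_{i_j}(x̃)) + ∇f(x̃) − ∇f(x)‖². Then (1/m)·E_I[err(I, x)] + (1 − 1/m)·E_I[err(I, x̃_old)] ≤ (1 − 1/m)·(1/(bn))∑_{i=1}^n ‖∇fᵢ(x) − ∇fᵢ(x̃_old)‖², where E_I denotes expectation over the random batch. (This is the loop-less SVRG estimator error bound: the pivot x̃ equals x with probability 1/m and x̃_old otherwise, and err(I, x) = 0.) -/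

import Mathlib

open Finset
open scoped RealInnerProductSpace

lemma card_ne {ι : Type*} [Fintype ι] [DecidableEq ι] (j : ι) :
    Fintype.card {k : ι // k ≠ j} = Fintype.card ι - 1 := by
  have := Fintype.card_subtype_compl (fun k : ι => k = j)
  simpa [Fintype.card_subtype_eq] using this

lemma sum_eval {ι : Type*} [Fintype ι] [DecidableEq ι] {n : ℕ} (j : ι) (φ : Fin n → ℝ) :
    ∑ I : ι → Fin n, φ (I j) = (n : ℝ) ^ (Fintype.card ι - 1) * ∑ i, φ i := by
  rw [← Equiv.sum_comp (Equiv.funSplitAt j (Fin n)).symm (fun I => φ (I j))]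
  simp only [Fintype.sum_prod_type, Equiv.funSplitAt_symm_apply, dif_pos rfl, dite_true,
    Finset.sum_const, card_univ, nsmul_eq_mul, ← Finset.sum_mul, Fintype.card_fun, card_ne,
    Fintype.card_fin]
  push_cast
  rw [Finset.mul_sum]

lemma sum_eval2 {ι : Type*} [Fintype ι] [DecidableEq ι] {n : ℕ} {j k : ι} (hjk : k ≠ j)
    (ψ : Fin n → Fin n → ℝ) :
    ∑ I : ι → Fin n, ψ (I j) (I k) =
      (n : ℝ) ^ (Fintype.card ι - 2) * ∑ p, ∑ q, ψ p q := by
  rw [← Equiv.sum_comp (Equiv.funSplitAt j (Fin n)).symm (fun I => ψ (I j) (I k))]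
  simp only [Fintype.sum_prod_type, Equiv.funSplitAt_symm_apply, dif_pos rfl, dite_true,
    dif_neg hjk]
  have : ∀ v : Fin n, ∑ rest : { l // l ≠ j } → Fin n, ψ v (rest ⟨k, hjk⟩) =
      (n : ℝ) ^ (Fintype.card ι - 2) * ∑ q, ψ v q := by
    intro v
    rw [sum_eval (⟨k, hjk⟩ : { l // l ≠ j }) (ψ v), card_ne]
    norm_num [Nat.sub_sub]
  simp only [this, Finset.mul_sum]

lemma grad_avg {d n : ℕ} (f : Fin n → EuclideanSpace ℝ (Fin d) → ℝ)
    (hf : ∀ i, Differentiable ℝ (f i)) (xt : EuclideanSpace ℝ (Fin d)) :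
    gradient (fun w => (1 / (n : ℝ)) * ∑ i, f i w) xt =
      (1 / (n : ℝ)) • ∑ i, gradient (f i) xt := by
  apply HasGradientAt.gradient
  rw [hasGradientAt_iff_hasFDerivAt]
  have h1 : ∀ i : Fin n, HasFDerivAt (f i)
      (InnerProductSpace.toDual ℝ _ (gradient (f i) xt)) xt := by
    intro i
    rw [← hasGradientAt_iff_hasFDerivAt]
    exact ((hf i) xt).hasGradientAt
  have h2 : HasFDerivAt (fun w => ∑ i, f i w)
      (∑ i, InnerProductSpace.toDual ℝ _ (gradient (f i) xt)) xt :=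
    HasFDerivAt.fun_sum (fun i _ => h1 i)
  have h3 := h2.const_mul (1 / (n : ℝ))
  convert h3 using 1
  · rfl
  · simp [map_smul, map_sum, smul_comm]

/-- Loop-less SVRG estimator error bound.
`f = (1/n) ∑ᵢ fᵢ`; for a pivot `x̃` and a batch `I = (i₁, …, i_b)` of indices drawn independently
and uniformly from `{1, …, n}` (expectation `E_I` = average over all `n^b` tuples), set
`err(I, x̃) = ‖(1/b) ∑ⱼ (∇f_{iⱼ}(x) − ∇f_{iⱼ}(x̃)) + ∇f(x̃) − ∇f(x)‖²`. Then
`(1/m)·E_I[err(I, x)] + (1 − 1/m)·E_I[err(I, x̃_old)]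
  ≤ (1 − 1/m)·(1/(bn)) ∑ᵢ ‖∇fᵢ(x) − ∇fᵢ(x̃_old)‖²`. -/
theorem stmt_2 (d n b m : ℕ) (hn : 0 < n) (hb : 0 < b) (hm : 0 < m)
    (f : Fin n → EuclideanSpace ℝ (Fin d) → ℝ)
    (hf : ∀ i, Differentiable ℝ (f i))
    (F : EuclideanSpace ℝ (Fin d) → ℝ)
    (hF : F = fun w => (1 / (n : ℝ)) * ∑ i, f i w)
    (x xtold : EuclideanSpace ℝ (Fin d))
    (err : (Fin b → Fin n) → EuclideanSpace ℝ (Fin d) → ℝ)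
    (herr : ∀ (I : Fin b → Fin n) (xt : EuclideanSpace ℝ (Fin d)),
      err I xt = ‖(1 / (b : ℝ)) • (∑ j, (gradient (f (I j)) x - gradient (f (I j)) xt)) +
          gradient F xt - gradient F x‖ ^ 2) :
    (1 / (m : ℝ)) * ((1 / (n : ℝ) ^ b) * ∑ I : Fin b → Fin n, err I x) +
        (1 - 1 / (m : ℝ)) * ((1 / (n : ℝ) ^ b) * ∑ I : Fin b → Fin n, err I xtold) ≤
      (1 - 1 / (m : ℝ)) * ((1 / ((b : ℝ) * (n : ℝ))) *
        ∑ i, ‖gradient (f i) x - gradient (f i) xtold‖ ^ 2) := by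
  have hn' : (0 : ℝ) < n := by exact_mod_cast hn
  have hb' : (0 : ℝ) < b := by exact_mod_cast hb
  set g : Fin n → EuclideanSpace ℝ (Fin d) :=
    fun i => gradient (f i) x - gradient (f i) xtold with hg
  set μ : EuclideanSpace ℝ (Fin d) := (1 / (n : ℝ)) • ∑ i, g i with hμ
  set T : ℝ := ∑ i, ‖g i‖ ^ 2 with hT
  -- err I x = 0
  have herrx : ∀ I : Fin b → Fin n, err I x = 0 := by
    intro I; rw [herr]; simp
  -- gradients of F
  have hgF : ∀ xt, gradient F xt = (1 / (n : ℝ)) • ∑ i, gradient (f i) xt := by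
    intro xt; rw [hF]; exact grad_avg f hf xt
  -- err I xtold rewrite
  have hmu' : μ = (1 / (n : ℝ)) • ∑ i, gradient (f i) x -
      (1 / (n : ℝ)) • ∑ i, gradient (f i) xtold := by
    rw [hμ]
    simp only [hg]
    rw [Finset.sum_sub_distrib, smul_sub]
  have herr' : ∀ I : Fin b → Fin n,
      err I xtold = ‖(1 / (b : ℝ)) • (∑ j, g (I j)) - μ‖ ^ 2 := by
    intro I
    rw [herr, hgF, hgF, hmu']
    simp only [hg]
    congr 1
    abel
  -- sum of g equals n • μ
  have hsum : ∑ i, g i = (n : ℝ) • μ := by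
    rw [hμ, smul_smul]
    rw [mul_one_div, div_self hn'.ne', one_smul]
  -- key inner product sums
  have key : ∀ j k : Fin b, (∑ I : Fin b → Fin n, ⟪g (I j), g (I k)⟫) =
      if j = k then (n : ℝ) ^ (b - 1) * T else (n : ℝ) ^ b * ‖μ‖ ^ 2 := by
    intro j k
    by_cases hjk : j = k
    · subst hjk
      rw [if_pos rfl]
      have := sum_eval (n := n) j (fun i => ⟪g i, g i⟫)
      simp only [Fintype.card_fin] at this
      rw [this, hT]
      exact mul_eq_mul_left_iff.mpr (Or.inl
        (Finset.sum_congr rfl fun i _ => real_inner_self_eq_norm_sq _))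
    · rw [if_neg hjk]
      have hb2 : 2 ≤ b := by
        by_contra h
        push_neg at h
        interval_cases b
        exact hjk (Subsingleton.elim j k)
      have := sum_eval2 (n := n) (Ne.symm hjk) (fun p q => ⟪g p, g q⟫)
      simp only [Fintype.card_fin] at this
      rw [this]
      have hpq : ∑ p, ∑ q, ⟪g p, g q⟫ = (n : ℝ) ^ 2 * ‖μ‖ ^ 2 := by
        simp_rw [← inner_sum]
        rw [← sum_inner]
        rw [hsum, real_inner_smul_left, real_inner_smul_right,
          real_inner_self_eq_norm_sq]
        ring
      rw [hpq, ← mul_assoc, ← pow_add]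
      congr 2
      omega
  -- norm expansion for each I
  have hv2 : ∀ I : Fin b → Fin n, ‖(1 / (b : ℝ)) • (∑ j, g (I j)) - μ‖ ^ 2 =
      (1 / (b : ℝ)) ^ 2 * ∑ j, ∑ k, ⟪g (I j), g (I k)⟫ -
        2 * ((1 / (b : ℝ)) * ∑ j, ⟪g (I j), μ⟫) + ‖μ‖ ^ 2 := by
    intro I
    rw [norm_sub_sq_real]
    congr 2
    · rw [norm_smul, mul_pow]
      congr 1
      · simp [abs_of_pos (by positivity : (0:ℝ) < 1 / (b:ℝ))]
      · rw [← real_inner_self_eq_norm_sq, sum_inner]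
        exact Finset.sum_congr rfl fun j _ => inner_sum _ _ _
    · rw [real_inner_smul_left, sum_inner]
  -- total sum computation
  have hcard : (Fintype.card (Fin b → Fin n) : ℝ) = (n : ℝ) ^ b := by
    rw [Fintype.card_fun]; push_cast; simp
  have hjμ : ∀ j : Fin b, (∑ I : Fin b → Fin n, ⟪g (I j), μ⟫) =
      (n : ℝ) ^ (b - 1) * ((n : ℝ) * ‖μ‖ ^ 2) := by
    intro j
    have := sum_eval (n := n) j (fun i => ⟪g i, μ⟫)
    simp only [Fintype.card_fin] at this
    rw [this]
    congr 1
    rw [← sum_inner, hsum, real_inner_smul_left, real_inner_self_eq_norm_sq]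
  have hS : ∑ I : Fin b → Fin n, err I xtold ≤ (n : ℝ) ^ (b - 1) / b * T := by
    have e1 : (∑ I : Fin b → Fin n, err I xtold) =
        (1 / (b : ℝ)) ^ 2 * (∑ j : Fin b, ∑ k : Fin b,
            ∑ I : Fin b → Fin n, ⟪g (I j), g (I k)⟫) -
          2 * ((1 / (b : ℝ)) * ∑ j : Fin b,
            ∑ I : Fin b → Fin n, ⟪g (I j), μ⟫) +
          (n : ℝ) ^ b * ‖μ‖ ^ 2 := by
      simp_rw [herr', hv2]
      rw [Finset.sum_add_distrib, Finset.sum_sub_distrib, ← Finset.mul_sum,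
        Finset.sum_const, card_univ, nsmul_eq_mul, hcard]
      congr 2
      · congr 1
        rw [Finset.sum_comm]
        refine Finset.sum_congr rfl fun j _ => ?_
        rw [Finset.sum_comm]
      · rw [← Finset.mul_sum, ← Finset.mul_sum]
        congr 2
        rw [Finset.sum_comm]
    have e2 : (∑ j : Fin b, ∑ k : Fin b,
        ∑ I : Fin b → Fin n, ⟪g (I j), g (I k)⟫) =
        (b : ℝ) * ((n : ℝ) ^ (b - 1) * T) +
          (b : ℝ) * ((b : ℝ) - 1) * ((n : ℝ) ^ b * ‖μ‖ ^ 2) := by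
      simp_rw [key]
      have inner_sum_eval : ∀ j : Fin b, (∑ k : Fin b,
          if j = k then (n : ℝ) ^ (b - 1) * T else (n : ℝ) ^ b * ‖μ‖ ^ 2) =
          (n : ℝ) ^ (b - 1) * T + ((b : ℝ) - 1) * ((n : ℝ) ^ b * ‖μ‖ ^ 2) := by
        intro j
        have hsplit : ∀ k : Fin b,
            (if j = k then (n : ℝ) ^ (b - 1) * T else (n : ℝ) ^ b * ‖μ‖ ^ 2) =
            (n : ℝ) ^ b * ‖μ‖ ^ 2 +
              (if j = k then (n : ℝ) ^ (b - 1) * T - (n : ℝ) ^ b * ‖μ‖ ^ 2 else 0) := by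
          intro k
          split <;> ring
        simp_rw [hsplit]
        rw [Finset.sum_add_distrib, Finset.sum_const, card_univ, Fintype.card_fin,
          nsmul_eq_mul, Finset.sum_ite_eq, if_pos (Finset.mem_univ j)]
        ring
      simp_rw [inner_sum_eval]
      rw [Finset.sum_const, card_univ, Fintype.card_fin, nsmul_eq_mul]
      ring
    rw [e1, e2]
    simp_rw [hjμ]
    rw [Finset.sum_const, card_univ, Fintype.card_fin, nsmul_eq_mul]
    have hnb : (n : ℝ) ^ (b - 1) * (n : ℝ) = (n : ℝ) ^ b := by
      rw [← pow_succ]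
      congr 1
      omega
    have hμ2 : 0 ≤ ‖μ‖ ^ 2 := by positivity
    have expand : (1 / (b : ℝ)) ^ 2 * ((b : ℝ) * ((n : ℝ) ^ (b - 1) * T) +
          (b : ℝ) * ((b : ℝ) - 1) * ((n : ℝ) ^ b * ‖μ‖ ^ 2)) -
        2 * ((1 / (b : ℝ)) * ((b : ℝ) * ((n : ℝ) ^ (b - 1) * ((n : ℝ) * ‖μ‖ ^ 2)))) +
        (n : ℝ) ^ b * ‖μ‖ ^ 2 =
        (n : ℝ) ^ (b - 1) / b * T - (n : ℝ) ^ b / b * ‖μ‖ ^ 2 := by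
      rw [← hnb]
      field_simp
      ring
    rw [expand]
    have : 0 ≤ (n : ℝ) ^ b / b * ‖μ‖ ^ 2 := by positivity
    linarith
  -- assemble
  have hfac : (0 : ℝ) ≤ 1 - 1 / (m : ℝ) := by
    have : (1 : ℝ) ≤ m := by exact_mod_cast hm
    have : 1 / (m : ℝ) ≤ 1 := by
      rw [div_le_one (by positivity)]
      exact this
    linarith
  have h0 : ∑ I : Fin b → Fin n, err I x = 0 := by
    exact Finset.sum_eq_zero fun I _ => herrx I
  rw [h0]
  simp only [mul_zero, zero_add]
  apply mul_le_mul_of_nonneg_left _ hfac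
  have step : (1 / (n : ℝ) ^ b) * ∑ I : Fin b → Fin n, err I xtold ≤
      (1 / (n : ℝ) ^ b) * ((n : ℝ) ^ (b - 1) / b * T) := by
    apply mul_le_mul_of_nonneg_left hS (by positivity)
  refine step.trans ?_
  have : (1 / (n : ℝ) ^ b) * ((n : ℝ) ^ (b - 1) / b * T) = 1 / ((b : ℝ) * n) * T := by
    have hnb : (n : ℝ) ^ (b - 1) * (n : ℝ) = (n : ℝ) ^ b := by
      rw [← pow_succ]; congr 1; omega
    rw [← hnb]
    field_simp
  rw [this, hT]
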